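/- arXiv:math/9712219 — 3 statements merged into one kernel-verified Lean document; each statement's English description precedes it below -/
import Mathlib

section
/- For every positive integer n there exists an injective group homomorphism from Aut(F_n) into Out(F_{n+1}), where F_k denotes the free group of rank k. (Concretely, extending each automorphism of F_n to F_{n+1} by fixing the extra basis element and passing to outer classes is injective.) -/
/-- The subgroup of inner automorphisms of a group `G`, as a subgroup of `MulAut G`. -/
def Inn (G : Type*) [Group G] : Subgroup (MulAut G) := (MulAut.conj : G →* MulAut G).range

instance Inn.normal (G : Type*) [Group G] : (Inn G).Normal := by
  constructor
  rintro - ⟨g, rfl⟩ φ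
  refine ⟨φ g, ?_⟩
  ext x
  simp [MulAut.conj, mul_assoc]

/-- The outer automorphism group of `G`. -/
def Out (G : Type*) [Group G] := MulAut G ⧸ Inn G

instance (G : Type*) [Group G] : Group (Out G) := QuotientGroup.Quotient.group (Inn G)

/-- The canonical projection `Aut(G) → Out(G)`. -/
def Out.mk {G : Type*} [Group G] : MulAut G →* Out G := QuotientGroup.mk' (Inn G)

set_option linter.unusedSectionVars false

namespace AutOutAux
open FreeGroup
variable {α : Type*} [DecidableEq α]

lemma invRev_cons (a : α × Bool) (M : List (α × Bool)) :
    invRev (a :: M) = invRev M ++ [(a.1, !a.2)] := by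
  simp [invRev]

lemma toWord_cons_mul (a : α × Bool) (g : FreeGroup α)
    (h : ∀ p ∈ g.toWord.head?, p.1 ≠ a.1) :
    (mk [a] * g).toWord = a :: g.toWord := by
  conv_lhs => rw [← mk_toWord (x := g)]
  rw [mul_mk, toWord_mk]
  show reduce (a :: g.toWord) = _
  rw [reduce.cons, reduce_toWord]
  cases hw : g.toWord with
  | nil => simp
  | cons hd tl =>
      have : hd.1 ≠ a.1 := h hd (by simp [hw])
      simp [this.symm]

lemma toWord_cons_mul_cancel (a : α × Bool) (g : FreeGroup α) (tl : List (α × Bool))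
    (h : g.toWord = (a.1, !a.2) :: tl) :
    (mk [a] * g).toWord = tl := by
  conv_lhs => rw [← mk_toWord (x := g)]
  rw [mul_mk, toWord_mk]
  show reduce (a :: g.toWord) = _
  rw [reduce.cons, reduce_toWord, h]
  simp

lemma cons_eq_append_mem {a : α × Bool} : ∀ {L : List (α × Bool)},
    a :: L = L ++ [a] → ∀ x ∈ L, x = a := by
  intro L
  induction L with
  | nil => intro _ x hx; simp at hx
  | cons b M ih =>
      intro h x hx
      simp only [List.cons_append, List.cons.injEq] at h
      obtain ⟨rfl, h2⟩ := h
      rcases List.mem_cons.mp hx with rfl | hx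
      · rfl
      · exact ih h2 x hx

lemma commute_of_free (t : α) : ∀ (N : ℕ) (g : FreeGroup α), g.toWord.length ≤ N →
    g * of t = of t * g → ∃ k : ℤ, g = of t ^ k := by
  intro N
  induction N with
  | zero =>
      intro g hlen _
      refine ⟨0, ?_⟩
      simp only [Nat.le_zero, List.length_eq_zero_iff] at hlen
      rw [zpow_zero, ← toWord_eq_nil_iff, hlen]
  | succ N ih =>
      -- a helper: strip a leading t-letter
      have strip : ∀ (g : FreeGroup α) (b : Bool) (tl : List (α × Bool)),
          g.toWord = (t, b) :: tl → g.toWord.length ≤ N + 1 →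
          g * of t = of t * g → ∃ k : ℤ, g = of t ^ k := by
        intro g b tl hw hlen hc
        have hinv : ((of t)⁻¹ : FreeGroup α) = mk [(t, false)] := by
          rw [of, inv_mk]; rfl
        have hof : (of t : FreeGroup α) = mk [(t, true)] := rfl
        have hlentl : tl.length ≤ N := by
          have := congrArg List.length hw
          simp at this; omega
        cases b with
        | true =>
            obtain ⟨g₁, hg₁⟩ : ∃ g₁, g₁ = (of t)⁻¹ * g := ⟨_, rfl⟩
            have hword : g₁.toWord = tl := by
              rw [hg₁, hinv]
              exact toWord_cons_mul_cancel (t, false) g tl (by simpa using hw)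
            have hc₁ : g₁ * of t = of t * g₁ := by
              rw [hg₁, mul_assoc, hc, inv_mul_cancel_left, mul_inv_cancel_left]
            obtain ⟨k, hk⟩ := ih g₁ (by rw [hword]; exact hlentl) hc₁
            refine ⟨k + 1, ?_⟩
            have : g = of t * g₁ := by rw [hg₁]; group
            rw [this, hk, ← zpow_one_add]
            ring_nf
        | false =>
            obtain ⟨g₁, hg₁⟩ : ∃ g₁, g₁ = of t * g := ⟨_, rfl⟩
            have hword : g₁.toWord = tl := by
              rw [hg₁, hof]
              exact toWord_cons_mul_cancel (t, true) g tl (by simpa using hw)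
            have hc₁ : g₁ * of t = of t * g₁ := by
              rw [hg₁, mul_assoc, hc]
            obtain ⟨k, hk⟩ := ih g₁ (by rw [hword]; exact hlentl) hc₁
            refine ⟨k - 1, ?_⟩
            have : g = (of t)⁻¹ * g₁ := by rw [hg₁]; group
            rw [this, hk, ← zpow_neg_one, ← zpow_add]
            ring_nf
      intro g hlen hc
      cases hw : g.toWord with
      | nil => exact ⟨0, by rw [zpow_zero, ← toWord_eq_nil_iff, hw]⟩
      | cons hd tl =>
          by_cases hhd : hd.1 = t
          · exact strip g hd.2 tl (by rw [hw, ← hhd]) hlen hc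
          · -- look at g⁻¹
            have hcinv : g⁻¹ * of t = of t * g⁻¹ := by
              have := congrArg (fun z => g⁻¹ * z * g⁻¹) hc
              simpa [mul_assoc] using this.symm
            have hwinv : (g⁻¹).toWord = invRev g.toWord := toWord_inv g
            cases hw' : (g⁻¹).toWord with
            | nil =>
                refine ⟨0, ?_⟩
                have : g⁻¹ = 1 := toWord_eq_nil_iff.mp hw'
                rw [zpow_zero, ← inv_inj, this, inv_one]
            | cons hd' tl' =>
                by_cases hhd' : hd'.1 = t
                · obtain ⟨k, hk⟩ := strip g⁻¹ hd'.2 tl' (by rw [hw', ← hhd'])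
                    (by rw [hwinv, invRev_length]; exact hlen) hcinv
                  exact ⟨-k, by rw [← inv_inj, hk]; group⟩
                · -- contradiction : (t,true)::L = L ++ [(t,true)]
                  exfalso
                  have hinv : ((of t)⁻¹ : FreeGroup α) = mk [(t, false)] := by
                    rw [of, inv_mk]; rfl
                  have hof : (of t : FreeGroup α) = mk [(t, true)] := rfl
                  have h1 : (of t * g).toWord = (t, true) :: g.toWord := by
                    rw [hof]
                    apply toWord_cons_mul
                    intro p hp
                    rw [hw] at hp
                    simp at hp
                    subst hp; exact hhd
                  have h2 : ((of t)⁻¹ * g⁻¹).toWord = (t, false) :: (g⁻¹).toWord := by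
                    rw [hinv]
                    apply toWord_cons_mul
                    intro p hp
                    rw [hw'] at hp
                    simp at hp
                    subst hp; exact hhd'
                  have h3 : (g * of t).toWord = invRev ((g⁻¹).toWord) ++ [(t, true)] := by
                    have : g * of t = ((of t)⁻¹ * g⁻¹)⁻¹ := by group
                    rw [this, toWord_inv, h2, invRev_cons]
                    rfl
                  have h4 : invRev ((g⁻¹).toWord) = g.toWord := by
                    rw [hwinv, invRev_invRev]
                  rw [hc, h1, h4] at h3
                  have := cons_eq_append_mem h3 hd (by rw [hw]; simp)
                  exact hhd (by rw [this])

lemma commute_with_of {t : α} {g : FreeGroup α} (h : g * of t = of t * g) :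
    ∃ k : ℤ, g = of t ^ k :=
  commute_of_free t g.toWord.length g le_rfl h

namespace AutOut

variable (n : ℕ)

/-- extension of an endomorphism -/
def E (φ : MulAut (FreeGroup (Fin n))) :
    FreeGroup (Fin (n + 1)) →* FreeGroup (Fin (n + 1)) :=
  FreeGroup.lift fun i =>
    Fin.lastCases (FreeGroup.of (Fin.last n))
      (fun j => FreeGroup.map Fin.castSucc (φ (FreeGroup.of j))) i

@[simp] lemma E_of_castSucc (φ : MulAut (FreeGroup (Fin n))) (j : Fin n) :
    E n φ (FreeGroup.of j.castSucc) = FreeGroup.map Fin.castSucc (φ (FreeGroup.of j)) := by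
  rw [E, lift_apply_of, Fin.lastCases_castSucc]

@[simp] lemma E_of_last (φ : MulAut (FreeGroup (Fin n))) :
    E n φ (FreeGroup.of (Fin.last n)) = FreeGroup.of (Fin.last n) := by
  rw [E, lift_apply_of, Fin.lastCases_last]

lemma E_map (φ : MulAut (FreeGroup (Fin n))) (w : FreeGroup (Fin n)) :
    E n φ (FreeGroup.map Fin.castSucc w) = FreeGroup.map Fin.castSucc (φ w) := by
  have : (E n φ).comp (FreeGroup.map Fin.castSucc) =
      (FreeGroup.map Fin.castSucc).comp ((φ : MulAut (FreeGroup (Fin n))) :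
        FreeGroup (Fin n) →* FreeGroup (Fin n)) := by
    apply ext_hom
    intro a
    simp
  exact DFunLike.congr_fun this w

lemma E_mul (φ ψ : MulAut (FreeGroup (Fin n))) :
    E n (φ * ψ) = (E n φ).comp (E n ψ) := by
  apply ext_hom
  intro a
  induction a using Fin.lastCases with
  | last => simp
  | cast j => simp [E_map]

lemma E_one : E n 1 = MonoidHom.id _ := by
  apply ext_hom
  intro a
  induction a using Fin.lastCases with
  | last => simp
  | cast j => simp

/-- the extension as an automorphism -/
def EA : MulAut (FreeGroup (Fin n)) →* MulAut (FreeGroup (Fin (n + 1))) :=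
  MonoidHom.mk'
    (fun φ => MonoidHom.toMulEquiv (E n φ) (E n φ⁻¹)
      (by rw [← E_mul, inv_mul_cancel, E_one])
      (by rw [← E_mul, mul_inv_cancel, E_one]))
    (by
      intro φ ψ
      ext x
      show E n (φ * ψ) x = E n φ (E n ψ x)
      rw [E_mul]; rfl)

lemma EA_apply (φ : MulAut (FreeGroup (Fin n))) (x : FreeGroup (Fin (n + 1))) :
    EA n φ x = E n φ x := rfl

/-- retraction killing the last generator -/
def π : FreeGroup (Fin (n + 1)) →* FreeGroup (Fin n) :=
  FreeGroup.lift fun i => Fin.lastCases 1 (fun j => FreeGroup.of j) i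

@[simp] lemma π_of_castSucc (j : Fin n) : π n (FreeGroup.of j.castSucc) = FreeGroup.of j := by
  rw [π, lift_apply_of, Fin.lastCases_castSucc]

@[simp] lemma π_of_last : π n (FreeGroup.of (Fin.last n)) = 1 := by
  rw [π, lift_apply_of, Fin.lastCases_last]

@[simp] lemma π_map (w : FreeGroup (Fin n)) : π n (FreeGroup.map Fin.castSucc w) = w := by
  have : (π n).comp (FreeGroup.map Fin.castSucc) = MonoidHom.id _ := by
    apply ext_hom; intro a; simp
  exact DFunLike.congr_fun this w

end AutOut


namespace AutOut

@[simp] lemma EA_of_last' (n : ℕ) (φ : MulAut (FreeGroup (Fin n))) :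
    EA n φ (FreeGroup.of (Fin.last n)) = FreeGroup.of (Fin.last n) := by
  rw [EA_apply, E_of_last]

@[simp] lemma EA_of_castSucc' (n : ℕ) (φ : MulAut (FreeGroup (Fin n))) (j : Fin n) :
    EA n φ (FreeGroup.of j.castSucc) = FreeGroup.map Fin.castSucc (φ (FreeGroup.of j)) := by
  rw [EA_apply, E_of_castSucc]

end AutOut
end AutOutAux

/-- `Aut(F_n)` embeds into `Out(F_{n+1})`. -/
theorem aut_embeds_in_out_succ (n : ℕ) (hn : 0 < n) :
    ∃ f : MulAut (FreeGroup (Fin n)) →* Out (FreeGroup (Fin (n + 1))),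
      Function.Injective f := by
  refine ⟨Out.mk.comp (AutOutAux.AutOut.EA n), (injective_iff_map_eq_one _).mpr ?_⟩
  intro φ h
  have hmem : AutOutAux.AutOut.EA n φ ∈ Inn (FreeGroup (Fin (n + 1))) := by
    have := (QuotientGroup.eq_one_iff (AutOutAux.AutOut.EA n φ)).mp h
    exact this
  obtain ⟨g, hg⟩ := hmem
  have happ : ∀ x, g * x * g⁻¹ = AutOutAux.AutOut.EA n φ x := fun x => by
    rw [← hg]; rfl
  have hcomm : g * FreeGroup.of (Fin.last n) = FreeGroup.of (Fin.last n) * g := by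
    have := happ (FreeGroup.of (Fin.last n))
    rw [AutOutAux.AutOut.EA_of_last'] at this
    calc g * FreeGroup.of (Fin.last n) = (g * FreeGroup.of (Fin.last n) * g⁻¹) * g := by group
    _ = FreeGroup.of (Fin.last n) * g := by rw [this]
  obtain ⟨k, hk⟩ := AutOutAux.commute_with_of hcomm
  have hπg : AutOutAux.AutOut.π n g = 1 := by
    rw [hk, map_zpow, AutOutAux.AutOut.π_of_last, one_zpow]
  have hfix : ∀ j : Fin n, φ (FreeGroup.of j) = FreeGroup.of j := by
    intro j
    have h1 := happ (FreeGroup.of j.castSucc)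
    rw [AutOutAux.AutOut.EA_of_castSucc'] at h1
    have h2 := congrArg (AutOutAux.AutOut.π n) h1
    rw [map_mul, map_mul, map_inv, hπg, AutOutAux.AutOut.π_map, AutOutAux.AutOut.π_of_castSucc] at h2
    simpa using h2.symm
  have : (φ : FreeGroup (Fin n) →* FreeGroup (Fin n)) = MonoidHom.id _ :=
    FreeGroup.ext_hom _ _ fun a => by simpa using hfix a
  ext x
  exact DFunLike.congr_fun this x
end

section
/- Let G be a free group (on any set of generators) and let F be a nonabelian subgroup of G. Then the centralizer of F in G is trivial: the only element of G commuting with every element of F is the identity. Equivalently, no non-trivial inner automorphism of G fixes F pointwise. -/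
/-- If `of t` commutes with a nontrivial element `g` of a free group, then `t` is the
first letter of the reduced word of `g`. -/
private lemma FreeGroup.eq_head_of_commute {β : Type*} [DecidableEq β] (g : FreeGroup β) (i : β) (s : Bool)
    (w' : List (β × Bool)) (hw : g.toWord = (i, s) :: w') (t : β)
    (h : FreeGroup.of t * g = g * FreeGroup.of t) : t = i := by
  by_contra hne
  have h1 : (FreeGroup.of t * g).toWord = (t, true) :: g.toWord := by
    conv_lhs => rw [← FreeGroup.mk_toWord (x := g)]
    rw [show (FreeGroup.of t : FreeGroup β) = FreeGroup.mk [(t, true)] from rfl,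
      FreeGroup.mul_mk, FreeGroup.toWord_mk,
      show ([(t, true)] ++ g.toWord : List (β × Bool)) = (t, true) :: g.toWord from rfl,
      FreeGroup.reduce.cons, FreeGroup.reduce_toWord, hw]
    simp [hne]
  have h2 : List.Sublist (g * FreeGroup.of t).toWord (g.toWord ++ [(t, true)]) := by
    have := FreeGroup.toWord_mul_sublist g (FreeGroup.of t)
    rwa [FreeGroup.toWord_of] at this
  rw [← h, h1] at h2
  have hlen : ((t, true) :: g.toWord).length = (g.toWord ++ [(t, true)]).length := by simp
  have heq := h2.eq_of_length hlen
  rw [hw] at heq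
  have : ((t, true) : β × Bool) = (i, s) := by
    simpa using congrArg List.head? heq
  exact hne (congrArg Prod.fst this)

/-- A free group with a nontrivial central element is commutative. -/
private lemma FreeGroup.comm_of_central {β : Type*} [DecidableEq β] (g : FreeGroup β) (hg : g ≠ 1)
    (hc : ∀ x : FreeGroup β, x * g = g * x) : ∀ x y : FreeGroup β, x * y = y * x := by
  obtain ⟨⟨i, s⟩, w', hw⟩ : ∃ p w', g.toWord = p :: w' := by
    cases hwd : g.toWord with
    | nil => exact absurd (FreeGroup.toWord_eq_nil_iff.mp hwd) hg
    | cons p w' => exact ⟨p, w', rfl⟩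
  have hsub : ∀ t : β, t = i := fun t =>
    FreeGroup.eq_head_of_commute g i s w' hw t (hc _)
  have key : ∀ x : FreeGroup β, ∃ n : ℤ, x = FreeGroup.of i ^ n := by
    intro x
    induction x using FreeGroup.induction_on with
    | C1 => exact ⟨0, by simp⟩
    | of t => exact ⟨1, by rw [hsub t]; simp⟩
    | inv_of t ih =>
      obtain ⟨n, hn⟩ := ih
      exact ⟨-n, by rw [hn, zpow_neg]⟩
    | mul x y hx hy =>
      obtain ⟨n, hn⟩ := hx
      obtain ⟨m, hm⟩ := hy
      exact ⟨n + m, by rw [hn, hm, zpow_add]⟩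
  intro x y
  obtain ⟨n, rfl⟩ := key x
  obtain ⟨m, rfl⟩ := key y
  rw [← zpow_add, ← zpow_add, add_comm]

/-- Any free group with a nontrivial central element is commutative. -/
private lemma IsFreeGroup.comm_of_central {G : Type*} [Group G] [IsFreeGroup G] (g : G)
    (hg : g ≠ 1) (hc : ∀ x : G, x * g = g * x) : ∀ x y : G, x * y = y * x := by
  obtain ⟨ι, ⟨b⟩⟩ := IsFreeGroup.nonempty_basis (G := G)
  letI := Classical.decEq ι
  set e := b.repr with he
  have hg' : e g ≠ 1 := fun h => hg (e.injective (by simpa using h))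
  have hc' : ∀ x : FreeGroup ι, x * e g = e g * x := by
    intro x
    have := hc (e.symm x)
    calc x * e g = e (e.symm x * g) := by simp
    _ = e (g * e.symm x) := by rw [this]
    _ = e g * x := by simp
  intro x y
  apply e.injective
  rw [map_mul, map_mul, FreeGroup.comm_of_central (e g) hg' hc']

/-- In a free group, the centralizer of a nonabelian subgroup is trivial: only the
identity commutes with every element of the subgroup. -/
theorem centralizer_of_nonabelian_subgroup_of_free_group_trivial {α : Type*}
    (F : Subgroup (FreeGroup α)) (hna : ∃ a ∈ F, ∃ b ∈ F, a * b ≠ b * a) :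
    ∀ g : FreeGroup α, (∀ x ∈ F, g * x = x * g) → g = 1 := by
  intro g hgc
  by_contra hg
  obtain ⟨a, ha, b, hb, hab⟩ := hna
  set H := Subgroup.closure ({a, b, g} : Set (FreeGroup α)) with hH
  have haH : a ∈ H := Subgroup.subset_closure (by simp)
  have hbH : b ∈ H := Subgroup.subset_closure (by simp)
  have hgH : g ∈ H := Subgroup.subset_closure (by simp)
  have hcent : ∀ x ∈ H, x * g = g * x := by
    intro x hx
    induction hx using Subgroup.closure_induction with
    | mem y hy =>
      rcases hy with rfl | rfl | rfl
      · exact (hgc y ha).symm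
      · exact (hgc y hb).symm
      · rfl
    | one => simp
    | mul x y _ _ ihx ihy => rw [mul_assoc, ihy, ← mul_assoc, ihx, mul_assoc]
    | inv x _ ihx =>
      calc x⁻¹ * g = x⁻¹ * g * x * x⁻¹ := by group
      _ = x⁻¹ * (x * g) * x⁻¹ := by rw [mul_assoc x⁻¹ g x, ← ihx]
      _ = g * x⁻¹ := by group
  have key := IsFreeGroup.comm_of_central (G := H) ⟨g, hgH⟩
    (fun h => hg (congrArg Subtype.val h))
    (fun x => Subtype.ext (hcent x.1 x.2))
  have := key ⟨a, haH⟩ ⟨b, hbH⟩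
  exact hab (congrArg Subtype.val this)
end

section
/- Every solvable subgroup of a free group is cyclic (trivial or infinite cyclic). -/
open Equiv Equiv.Perm

/-- A solvable free group has a subsingleton generating type. -/
theorem subsingleton_of_solvable_freeGroup {S : Type*} (h : IsSolvable (FreeGroup S)) :
    Subsingleton S := by
  by_contra hs
  rw [not_subsingleton_iff_nontrivial] at hs
  obtain ⟨a, b, hab⟩ := hs
  classical
  set σ : Perm (Fin 5) := finRotate 5 with hσ
  set τ : Perm (Fin 5) := Equiv.swap 0 (σ 0) with hτ
  let f : FreeGroup S →* Perm (Fin 5) :=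
    FreeGroup.lift (fun s => if s = a then σ else τ)
  have hfa : f (FreeGroup.of a) = σ := by simp [f]
  have hfb : f (FreeGroup.of b) = τ := by simp [f, hab.symm]
  have hsurj : Function.Surjective f := by
    rw [← MonoidHom.range_eq_top]
    rw [eq_top_iff, ← closure_cycle_adjacent_swap (isCycle_finRotate (n := 3))
      (support_finRotate (n := 3)) 0, Subgroup.closure_le]
    rintro x hx
    rcases hx with hx | hx
    · exact ⟨FreeGroup.of a, by rw [hfa, hx]⟩
    · simp only [Set.mem_singleton_iff] at hx
      exact ⟨FreeGroup.of b, by rw [hfb, hτ, hx]⟩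
  exact Equiv.Perm.fin_5_not_solvable (by haveI : Group.IsSolvable (FreeGroup S) := h; exact solvable_of_surjective hsurj)

theorem isCyclic_freeGroup_of_subsingleton {S : Type*} [Subsingleton S] :
    IsCyclic (FreeGroup S) := by
  by_cases hS : Nonempty S
  · obtain ⟨s⟩ := hS
    refine ⟨⟨FreeGroup.of s, fun x => ?_⟩⟩
    have : x ∈ Subgroup.closure (Set.range (FreeGroup.of : S → FreeGroup S)) := by
      rw [FreeGroup.closure_range_of]; trivial
    have hr : Set.range (FreeGroup.of : S → FreeGroup S) = {FreeGroup.of s} := by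
      ext y; simp only [Set.mem_range, Set.mem_singleton_iff]
      constructor
      · rintro ⟨t, rfl⟩; rw [Subsingleton.elim t s]
      · rintro rfl; exact ⟨s, rfl⟩
    rw [hr, ← Subgroup.zpowers_eq_closure] at this
    exact this
  · have : Subsingleton (FreeGroup S) := by
      constructor
      intro x y
      have hx : x ∈ Subgroup.closure (Set.range (FreeGroup.of : S → FreeGroup S)) := by
        rw [FreeGroup.closure_range_of]; trivial
      have hy : y ∈ Subgroup.closure (Set.range (FreeGroup.of : S → FreeGroup S)) := by
        rw [FreeGroup.closure_range_of]; trivial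
      have hr : Set.range (FreeGroup.of : S → FreeGroup S) = ∅ := by
        simp [Set.range_eq_empty_iff, not_nonempty_iff.mp hS]
      rw [hr, Subgroup.closure_empty, Subgroup.mem_bot] at hx hy
      rw [hx, hy]
    exact isCyclic_of_subsingleton

/-- Every solvable subgroup of a free group is cyclic. -/
theorem solvable_subgroup_of_free_group_is_cyclic {α : Type*}
    (H : Subgroup (FreeGroup α)) (hH : IsSolvable H) : IsCyclic H := by
  obtain ⟨ι, ⟨b⟩⟩ := (inferInstance : IsFreeGroup H).nonempty_basis
  have hs : IsSolvable (FreeGroup ι) := by haveI : Group.IsSolvable H := hH; exact solvable_of_surjective (f := b.repr.toMonoidHom) b.repr.surjective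
  have : Subsingleton ι := subsingleton_of_solvable_freeGroup hs
  have : IsCyclic (FreeGroup ι) := isCyclic_freeGroup_of_subsingleton
  exact isCyclic_of_surjective b.repr.symm.toMonoidHom b.repr.symm.surjective
end
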